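/- Let S be a finite Clifford semigroup, n ∈ ℕ, and a_1, …, a_k, b ∈ S^n such that b(i) ≤ a_j(i) for all i ∈ {1,…,n} and j ∈ {1,…,k}, where ≤ is the Clifford preorder on S. Let e ∈ S^n be defined by e(i) := the idempotent power of b(i). If for every i ∈ {1,…,n} the element e(i) lies in the subsemigroup of S generated by {a_1(i), …, a_k(i)}, then e lies in the subsemigroup of S^n generated by {a_1, …, a_k}. -/

import Mathlib

/-- Product of a nonempty list of semigroup elements: `a * l₁ * l₂ * ⋯`. -/
def sgProd {S : Type*} [Semigroup S] (a : S) (l : List S) : S :=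
  l.foldl (· * ·) a

/-- `spow a m = a ^ m` for `m ≥ 1` (with junk value `a` at `m = 0`). -/
def spow {S : Type*} [Semigroup S] (a : S) : ℕ → S
  | 0 => a
  | 1 => a
  | (n + 2) => spow a (n + 1) * a

/-- A (two-sided) ideal of a semigroup: a nonempty subset absorbing
multiplication on both sides. -/
def IsIdeal {S : Type*} [Semigroup S] (I : Set S) : Prop :=
  I.Nonempty ∧ ∀ s : S, ∀ x ∈ I, s * x ∈ I ∧ x * s ∈ I

/-- A subset of a semigroup that is a subsemigroup which is a group. -/
def IsGroupSubset {S : Type*} [Semigroup S] (G : Set S) : Prop :=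
  (∀ x ∈ G, ∀ y ∈ G, x * y ∈ G) ∧
    ∃ e ∈ G, (∀ x ∈ G, e * x = x ∧ x * e = x) ∧
      ∀ x ∈ G, ∃ y ∈ G, x * y = e ∧ y * x = e

/-- A subset of a semigroup that is a Clifford semigroup in its own right:
it is closed under multiplication, completely regular (every element lies in a
subsemigroup which is a group), and its idempotents are central in it. -/
def IsCliffordSubset {S : Type*} [Semigroup S] (C : Set S) : Prop :=
  (∀ x ∈ C, ∀ y ∈ C, x * y ∈ C) ∧
    (∀ x ∈ C, ∃ G ⊆ C, IsGroupSubset G ∧ x ∈ G) ∧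
    (∀ e ∈ C, e * e = e → ∀ s ∈ C, e * s = s * e)

/-- A semigroup is a Clifford semigroup. -/
def IsCliffordSG (C : Type*) [Semigroup C] : Prop :=
  IsCliffordSubset (Set.univ : Set C)

/-- A semigroup is nilpotent: for some `d`, any two products of at least `d`
elements are equal. -/
def IsNilpotentSG (N : Type*) [Semigroup N] : Prop :=
  ∃ d : ℕ, ∀ (a b : N) (l l' : List N),
    d ≤ l.length + 1 → d ≤ l'.length + 1 → sgProd a l = sgProd b l'

section MyAux

variable {S : Type*} [Semigroup S]

/-- `pw u t = u ^ (t+1)`. -/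
def pw (u : S) : ℕ → S
  | 0 => u
  | (t + 1) => pw u t * u

theorem pw_succ (u : S) (t : ℕ) : pw u (t + 1) = pw u t * u := rfl

theorem pw_succ' (u : S) (t : ℕ) : pw u (t + 1) = u * pw u t := by
  induction t with
  | zero => rfl
  | succ t ih => rw [pw_succ, ih, mul_assoc, ← pw_succ, ih]

theorem spow_eq_pw (u : S) (m : ℕ) : spow u (m + 1) = pw u m := by
  induction m with
  | zero => rfl
  | succ m ih =>
    show spow u (m + 1) * u = _
    rw [ih]; rfl

/-- The maximal subgroup at `e`. -/
def Gset (e : S) : Set S :=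
  {u | e * u = u ∧ u * e = u ∧ ∃ v, u * v = e ∧ v * u = e ∧ e * v = v ∧ v * e = v}

theorem e_mul_pw {e u : S} (h : e * u = u) : ∀ t, e * pw u t = pw u t
  | 0 => h
  | (t + 1) => by rw [pw_succ, ← mul_assoc, e_mul_pw h t]

theorem pw_mul_e {e u : S} (h : u * e = u) : ∀ t, pw u t * e = pw u t
  | 0 => h
  | (t + 1) => by rw [pw_succ, mul_assoc, h]

theorem mem_Gset_of_pw {e u : S} (he : e * u = u) (hue : u * e = u) {t : ℕ}
    (h : pw u t = e) : u ∈ Gset e := by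
  refine ⟨he, hue, ?_⟩
  cases t with
  | zero =>
    have hu : u = e := h
    subst hu
    exact ⟨u, hue, he, he, hue⟩
  | succ s =>
    refine ⟨pw u s, ?_, ?_, e_mul_pw he s, pw_mul_e hue s⟩
    · rw [← pw_succ']; exact h
    · rw [← pw_succ]; exact h

theorem Gset_mul {e u w : S} (hu : u ∈ Gset e) (hw : w ∈ Gset e) : u * w ∈ Gset e := by
  obtain ⟨heu, hue, v, huv, hvu, hev, hve⟩ := hu
  obtain ⟨hew, hwe, z, hwz, hzw, hez, hze⟩ := hw
  refine ⟨by rw [← mul_assoc, heu], by rw [mul_assoc, hwe], z * v, ?_, ?_, ?_, ?_⟩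
  · calc u * w * (z * v) = u * ((w * z) * v) := by simp only [mul_assoc]
      _ = u * (e * v) := by rw [hwz]
      _ = u * v := by rw [hev]
      _ = e := huv
  · calc z * v * (u * w) = z * ((v * u) * w) := by simp only [mul_assoc]
      _ = z * (e * w) := by rw [hvu]
      _ = z * w := by rw [hew]
      _ = e := hzw
  · calc e * (z * v) = (e * z) * v := by rw [mul_assoc]
      _ = z * v := by rw [hez]
  · calc z * v * e = z * (v * e) := by rw [mul_assoc]
      _ = z * v := by rw [hve]

theorem Gset_id {e : S} (h : e * e = e) : e ∈ Gset e := ⟨h, h, e, h, h, h, h⟩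

theorem Gset_pow_eq [Finite S] {e u : S} (hu : u ∈ Gset e) : ∃ m, pw u m = e := by
  obtain ⟨heu, hue, v, huv, hvu, hev, hve⟩ := hu
  have key : ∀ p d, pw u p = pw u (p + (d + 1)) → ∃ m, pw u m = e := by
    intro p
    induction p with
    | zero =>
      intro d h
      rw [Nat.zero_add] at h
      refine ⟨d, ?_⟩
      calc pw u d = e * pw u d := (e_mul_pw heu d).symm
        _ = (v * u) * pw u d := by rw [hvu]
        _ = v * (u * pw u d) := mul_assoc _ _ _
        _ = v * pw u (d + 1) := by rw [← pw_succ']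
        _ = v * pw u 0 := by rw [← h]
        _ = e := hvu
    | succ p ih =>
      intro d h
      apply ih d
      have h1 : v * (u * pw u p) = v * (u * pw u (p + (d + 1))) := by
        rw [← pw_succ', ← pw_succ']
        rw [show p + 1 + (d + 1) = (p + (d + 1)) + 1 by omega] at h
        rw [h]
      rw [← mul_assoc, hvu, e_mul_pw heu, ← mul_assoc, hvu, e_mul_pw heu] at h1
      exact h1
  obtain ⟨p, q, hpq, hpe⟩ := Finite.exists_ne_map_eq_of_infinite (pw u)
  rcases Nat.lt_or_ge p q with hlt | hge
  · exact key p (q - p - 1) (by rw [hpe]; congr 1; omega)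
  · have hlt : q < p := lt_of_le_of_ne hge (Ne.symm hpq)
    exact key q (p - q - 1) (by rw [← hpe]; congr 1; omega)

theorem foldl_mul {ι : Type*} (f : ι → S) :
    ∀ (l : List ι) (c x : S),
      l.foldl (fun s j => s * f j) (c * x) = c * l.foldl (fun s j => s * f j) x
  | [], _, _ => rfl
  | j :: l, c, x => by
    show List.foldl _ (c * x * f j) l = c * List.foldl _ (x * f j) l
    rw [mul_assoc, foldl_mul f l c (x * f j)]

theorem Gset_stay {ι : Type*} {e : S} (f : ι → S) (hf : ∀ j, e * f j ∈ Gset e) :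
    ∀ (l : List ι) (c : S), c ∈ Gset e →
      l.foldl (fun s j => s * f j) c ∈ Gset e
  | [], _, hc => hc
  | j :: l, c, hc => by
    have h2 : c * f j ∈ Gset e := by
      have h1 : c * f j = c * (e * f j) := by rw [← mul_assoc, hc.2.1]
      rw [h1]; exact Gset_mul hc (hf j)
    exact Gset_stay f hf l _ h2

theorem Gset_fstep {ι : Type*} {e : S} (hidem : e * e = e) (hcent : ∀ s, e * s = s * e)
    (f : ι → S) (hf : ∀ j, e * f j ∈ Gset e) :
    ∀ (l : List ι) (c : S), e * c ∈ Gset e →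
      e * l.foldl (fun s j => s * f j) c ∈ Gset e
  | [], _, hc => hc
  | j :: l, c, hc => by
    have h1 : e * (c * f j) = (e * c) * (e * f j) := by
      calc e * (c * f j) = (e * e) * (c * f j) := by rw [hidem]
        _ = e * (e * c) * f j := by simp only [mul_assoc]
        _ = e * (c * e) * f j := by rw [hcent c]
        _ = (e * c) * (e * f j) := by simp only [mul_assoc]
    have h2 : e * (c * f j) ∈ Gset e := by rw [h1]; exact Gset_mul hc (hf j)
    exact Gset_fstep hidem hcent f hf l _ h2

theorem lemD {e x : S} (hidem : e * e = e) (hcent : ∀ s, e * s = s * e)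
    {t : ℕ} (h : e * pw x t = e) : e * x ∈ Gset e := by
  have hpw : ∀ s, pw (e * x) s = e * pw x s := by
    intro s
    induction s with
    | zero => rfl
    | succ s ih =>
      rw [pw_succ, ih, pw_succ]
      calc e * pw x s * (e * x) = e * (pw x s * e) * x := by simp only [mul_assoc]
        _ = e * (e * pw x s) * x := by rw [← hcent (pw x s)]
        _ = (e * e) * (pw x s * x) := by simp only [mul_assoc]
        _ = e * (pw x s * x) := by rw [hidem]
  have h1 : e * (e * x) = e * x := by rw [← mul_assoc, hidem]
  have h2 : (e * x) * e = e * x := by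
    calc (e * x) * e = e * (x * e) := mul_assoc _ _ _
      _ = e * (e * x) := by rw [← hcent x]
      _ = e * x := h1
  exact mem_Gset_of_pw h1 h2 (t := t) (by rw [hpw t, h])

theorem closure_range_rep {ι : Type*} {f : ι → S} {x : S}
    (h : x ∈ Subsemigroup.closure (Set.range f)) :
    ∃ (j : ι) (l : List ι), l.foldl (fun s j' => s * f j') (f j) = x := by
  induction h using Subsemigroup.closure_induction with
  | mem y hy => obtain ⟨j, rfl⟩ := hy; exact ⟨j, [], rfl⟩
  | mul y z hy hz ihy ihz =>
    obtain ⟨j, l, hl⟩ := ihy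
    obtain ⟨j', l', hl'⟩ := ihz
    refine ⟨j, l ++ j' :: l', ?_⟩
    rw [List.foldl_append]
    show List.foldl _ (List.foldl _ (f j) l * f j') l' = y * z
    rw [hl, foldl_mul, hl']

theorem foldl_mem {M : Subsemigroup S} {ι : Type*} {f : ι → S} (hf : ∀ j, f j ∈ M) :
    ∀ (l : List ι) (c : S), c ∈ M → l.foldl (fun s j => s * f j) c ∈ M
  | [], _, hc => hc
  | j :: l, _, hc => foldl_mem hf l _ (M.mul_mem hc (hf j))

theorem pw_mem {M : Subsemigroup S} {u : S} (h : u ∈ M) : ∀ m, pw u m ∈ M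
  | 0 => h
  | (m + 1) => M.mul_mem (pw_mem h m) h

theorem foldl_apply {n k : ℕ} (a : Fin k → Fin n → S) :
    ∀ (l : List (Fin k)) (c : Fin n → S) (i : Fin n),
      (l.foldl (fun s j => s * a j) c) i = l.foldl (fun s j => s * a j i) (c i)
  | [], _, _ => rfl
  | j :: l, c, i => foldl_apply a l (c * a j) i

end MyAux


/-- For a finite Clifford semigroup `S` and `a₁, …, a_k, b ∈ Sⁿ`
(`n ≥ 1`) with `b i ≤ a j i` for all `i, j` (Clifford preorder), if the tuple
`e` of idempotent powers of the coordinates of `b` satisfies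
`e i ∈ ⟨a₁ i, …, a_k i⟩` for every `i`, then `e ∈ ⟨a₁, …, a_k⟩`. -/
theorem stmt12 {S : Type*} [Semigroup S] [Finite S] [Nonempty S]
    (hCl : IsCliffordSG S) (E : S → S)
    (hE : ∀ z : S, (∃ m, 1 ≤ m ∧ E z = spow z m) ∧ E z * E z = E z)
    (n k : ℕ) (hn : 0 < n) (a : Fin k → Fin n → S) (b : Fin n → S)
    (hba : ∀ (j : Fin k) (i : Fin n), E (b i) * E (a j i) = E (b i))
    (he : ∀ i : Fin n, E (b i) ∈ Subsemigroup.closure (Set.range fun j => a j i)) :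
    (fun i => E (b i)) ∈ Subsemigroup.closure (Set.range a) := by
  classical
  have hidem : ∀ i, E (b i) * E (b i) = E (b i) := fun i => (hE (b i)).2
  have hcent : ∀ (i : Fin n) (s : S), E (b i) * s = s * E (b i) := fun i s =>
    hCl.2.2 (E (b i)) (Set.mem_univ _) (hidem i) s (Set.mem_univ _)
  have hD : ∀ (i : Fin n) (j : Fin k), E (b i) * a j i ∈ Gset (E (b i)) := by
    intro i j
    obtain ⟨⟨m, hm1, hms⟩, -⟩ := hE (a j i)
    obtain ⟨t, rfl⟩ : ∃ t, m = t + 1 := ⟨m - 1, by omega⟩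
    apply lemD (hidem i) (hcent i) (t := t)
    rw [← spow_eq_pw, ← hms]
    exact hba j i
  choose hd tl hw using fun i => closure_range_rep (he i)
  -- the concatenated word
  have hLne : ((List.finRange n).map (fun i => hd i :: tl i)).flatten ≠ [] := by
    intro hnil
    have h0 := List.flatten_eq_nil_iff.mp hnil (hd ⟨0, hn⟩ :: tl ⟨0, hn⟩)
      (List.mem_map_of_mem (List.mem_finRange _))
    exact List.cons_ne_nil _ _ h0
  obtain ⟨j0, T, hLT⟩ := List.exists_cons_of_ne_nil hLne
  -- the big product in the Pi semigroup
  have hPmem : T.foldl (fun s j => s * a j) (a j0) ∈ Subsemigroup.closure (Set.range a) :=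
    foldl_mem (f := a) (fun j => Subsemigroup.subset_closure (Set.mem_range_self j)) T _
      (Subsemigroup.subset_closure (Set.mem_range_self j0))
  set P : Fin n → S := T.foldl (fun s j => s * a j) (a j0) with hP
  have hPG : ∀ i, P i ∈ Gset (E (b i)) := by
    intro i
    obtain ⟨A, B, hAB⟩ := List.append_of_mem (List.mem_finRange i)
    have hdec : j0 :: T =
        ((A.map (fun i => hd i :: tl i)).flatten) ++
          ((hd i :: tl i) ++ ((B.map (fun i => hd i :: tl i)).flatten)) := by
      rw [← hLT, hAB]
      simp [List.flatten_append]
    have hPi : P i = T.foldl (fun s j => s * a j i) (a j0 i) := by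
      rw [hP]; exact foldl_apply a T _ i
    rw [hPi]
    cases hA : (A.map (fun i => hd i :: tl i)).flatten with
    | nil =>
      rw [hA, List.nil_append, List.cons_append, List.cons.injEq] at hdec
      obtain ⟨h1, h2⟩ := hdec
      rw [h2, List.foldl_append, h1, hw i]
      exact Gset_stay _ (hD i) _ _ (Gset_id (hidem i))
    | cons j1 TA =>
      rw [hA, List.cons_append, List.cons.injEq] at hdec
      obtain ⟨h1, h2⟩ := hdec
      rw [h2, List.foldl_append, List.foldl_append]
      set c1 := TA.foldl (fun s j => s * a j i) (a j0 i) with hc1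
      have hgi : (hd i :: tl i).foldl (fun s j => s * a j i) c1 = E (b i) * c1 := by
        show (tl i).foldl (fun s j => s * a j i) (c1 * a (hd i) i) = _
        rw [foldl_mul, hw i, ← hcent i c1]
      rw [hgi]
      have hc1G : E (b i) * c1 ∈ Gset (E (b i)) := by
        rw [hc1]
        exact Gset_fstep (hidem i) (hcent i) _ (hD i) TA _ (hD i j0)
      exact Gset_stay _ (hD i) _ _ hc1G
  -- lift to the Pi semigroup
  choose v hv1 hv2 hv3 hv4 using fun i => (hPG i).2.2
  have hPGpi : P ∈ Gset (fun i => E (b i)) :=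
    ⟨funext fun i => (hPG i).1, funext fun i => (hPG i).2.1, v,
      funext hv1, funext hv2, funext hv3, funext hv4⟩
  obtain ⟨m, hm⟩ := Gset_pow_eq hPGpi
  rw [← hm]
  exact pw_mem hPmem m
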